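/- For the family P_β(λ) = λ^3 + Aλ^2 + (B+β)λ + D of real cubic polynomials, there exists β ∈ R such that all complex roots of P_β lie strictly inside the unit circle if and only if |D| < 1 and |A - D| < 2. -/

import Mathlib

open Complex Filter Topology

private lemma quad_abs_lt_one (p q : ℝ) (hq : |q| < 1) (hp : |p| < 1 + q)
    (z : ℂ) (hz : z ^ 2 + (p : ℂ) * z + (q : ℂ) = 0) : ‖z‖ < 1 := by
  obtain ⟨hq1, hq2⟩ := abs_lt.mp hq
  obtain ⟨hp1, hp2⟩ := abs_lt.mp hp
  have hconj : (starRingEnd ℂ) z ^ 2 + (p : ℂ) * (starRingEnd ℂ) z + (q : ℂ) = 0 := by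
    have h := congrArg (starRingEnd ℂ) hz
    simpa [map_add, map_mul, map_pow, Complex.conj_ofReal] using h
  have hfac : (z - (starRingEnd ℂ) z) * (z + (starRingEnd ℂ) z + (p : ℂ)) = 0 := by
    linear_combination hz - hconj
  rcases mul_eq_zero.mp hfac with h | h
  · have hzz : (starRingEnd ℂ) z = z := (sub_eq_zero.mp h).symm
    have hzr : (z.re : ℂ) = z := Complex.conj_eq_iff_re.mp hzz
    have hx : z.re ^ 2 + p * z.re + q = 0 := by
      have h0 : ((z.re ^ 2 + p * z.re + q : ℝ) : ℂ) = 0 := by push_cast [hzr]; exact hz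
      exact_mod_cast h0
    have habs : ‖z‖ = |z.re| := by nth_rewrite 1 [← hzr]; rw [Complex.norm_real, Real.norm_eq_abs]
    rw [habs, abs_lt]
    set x := z.re
    constructor
    · by_contra hcon
      push_neg at hcon
      nlinarith [mul_nonneg (by linarith : (0:ℝ) ≤ -(x+1)) (by linarith : (0:ℝ) ≤ -(x+q)),
        mul_nonneg (by linarith : (0:ℝ) ≤ -(x+1)) (by linarith : (0:ℝ) ≤ 1 + q - p)]
    · by_contra hcon
      push_neg at hcon
      nlinarith [mul_nonneg (by linarith : (0:ℝ) ≤ x - 1) (by linarith : (0:ℝ) ≤ x - q),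
        mul_nonneg (by linarith : (0:ℝ) ≤ x - 1) (by linarith : (0:ℝ) ≤ 1 + q + p)]
  · have hq' : (q : ℂ) = z * (starRingEnd ℂ) z := by linear_combination hz - z * h
    rw [Complex.mul_conj] at hq'
    have hqn : q = Complex.normSq z := by exact_mod_cast hq'
    have hsq : ‖z‖ ^ 2 = q := by rw [Complex.sq_norm, hqn]
    nlinarith [norm_nonneg z]

private lemma keyConj (p q x : ℝ) (hd : p ^ 2 < 4 * q) (hq0 : 0 < q) (hq1 : q < 1)
    (hx1 : -1 < x) (hx2 : x < 1) :
    |q| < 1 ∧ 0 < 1 + p + q ∧ 0 < 1 - p + q ∧ 0 < 1 + x * p + x ^ 2 * q := by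
  refine ⟨by rw [abs_lt]; constructor <;> nlinarith, ?_, ?_, ?_⟩
  · nlinarith [sq_nonneg (p + 2)]
  · nlinarith [sq_nonneg (p - 2)]
  · nlinarith [sq_nonneg (2 * q * x + p)]

private lemma keyReal (p q x s t : ℝ) (hp' : p = -(s + t)) (hmul : s * t = q)
    (hx1 : -1 < x) (hx2 : x < 1) (hs1 : -1 < s) (hs2 : s < 1) (ht1 : -1 < t) (ht2 : t < 1) :
    |q| < 1 ∧ 0 < 1 + p + q ∧ 0 < 1 - p + q ∧ 0 < 1 + x * p + x ^ 2 * q := by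
  have hxs : x * s < 1 := by
    nlinarith [mul_pos (by linarith : (0:ℝ) < 1 - x) (by linarith : (0:ℝ) < 1 + s),
      mul_pos (by linarith : (0:ℝ) < 1 + x) (by linarith : (0:ℝ) < 1 - s)]
  have hxt : x * t < 1 := by
    nlinarith [mul_pos (by linarith : (0:ℝ) < 1 - x) (by linarith : (0:ℝ) < 1 + t),
      mul_pos (by linarith : (0:ℝ) < 1 + x) (by linarith : (0:ℝ) < 1 - t)]
  refine ⟨?_, ?_, ?_, ?_⟩
  · rw [← hmul, abs_mul]
    have hsa : |s| < 1 := abs_lt.mpr ⟨hs1, hs2⟩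
    have hta : |t| < 1 := abs_lt.mpr ⟨ht1, ht2⟩
    nlinarith [abs_nonneg s, abs_nonneg t]
  · have h : 1 + p + q = (1 - s) * (1 - t) := by rw [hp', ← hmul]; ring
    rw [h]; exact mul_pos (by linarith) (by linarith)
  · have h : 1 - p + q = (1 + s) * (1 + t) := by rw [hp', ← hmul]; ring
    rw [h]; exact mul_pos (by linarith) (by linarith)
  · have h : 1 + x * p + x ^ 2 * q = (1 - x * s) * (1 - x * t) := by rw [hp', ← hmul]; ring
    rw [h]; exact mul_pos (by linarith) (by linarith)

private lemma finalStep (A b D x p q : ℝ) (hD : D = -(x * q)) (hq : q = b + x * p)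
    (hp : p = A + x) (hx1 : -1 < x) (hx2 : x < 1)
    (hqa : |q| < 1) (hpos1 : 0 < 1 + p + q) (hpos2 : 0 < 1 - p + q)
    (hpos3 : 0 < 1 + x * p + x ^ 2 * q) : |D| < 1 ∧ |A - D| < 2 := by
  obtain ⟨hq1, hq2⟩ := abs_lt.mp hqa
  have hDabs : |D| < 1 := by
    rw [hD, abs_neg, abs_mul]
    have hxa : |x| < 1 := abs_lt.mpr ⟨hx1, hx2⟩
    nlinarith [abs_nonneg x, abs_nonneg q]
  refine ⟨hDabs, ?_⟩
  have hu : 0 < 1 - A + b - D := by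
    have hid : 1 - A + b - D = (1 + x) * (1 - p + q) := by rw [hD, hq, hp]; ring
    rw [hid]; exact mul_pos (by linarith) hpos2
  have hv : 0 < 1 + A + b + D := by
    have hid : 1 + A + b + D = (1 - x) * (1 + p + q) := by rw [hD, hq, hp]; ring
    rw [hid]; exact mul_pos (by linarith) hpos1
  have hW : 0 < 1 - b + A * D - D ^ 2 := by
    have hid : 1 - b + A * D - D ^ 2 = (1 + x * p + x ^ 2 * q) * (1 - q) := by
      rw [hD, hq, hp]; ring
    rw [hid]; exact mul_pos hpos3 (by linarith)
  obtain ⟨hDl, hDu⟩ := abs_lt.mp hDabs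
  rw [abs_lt]
  constructor
  · by_contra hcon; push_neg at hcon
    have h1 : 0 < 2 + A + D + A * D - D ^ 2 := by linarith
    nlinarith [mul_nonneg (by linarith : (0:ℝ) ≤ 1 + D) (by linarith : (0:ℝ) ≤ -(2 + A - D))]
  · by_contra hcon; push_neg at hcon
    have h2 : 0 < 2 - A - D + A * D - D ^ 2 := by linarith
    nlinarith [mul_nonneg (by linarith : (0:ℝ) ≤ 1 - D) (by linarith : (0:ℝ) ≤ (A - D) - 2)]

private lemma realRootExists (A b D : ℝ) : ∃ x : ℝ, x ^ 3 + A * x ^ 2 + b * x + D = 0 := by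
  set f : ℝ → ℝ := fun x => x ^ 3 + A * x ^ 2 + b * x + D with hf
  set M : ℝ := 1 + |A| + |b| + |D| with hM
  have hM1 : 1 ≤ M := by
    have := abs_nonneg A; have := abs_nonneg b; have := abs_nonneg D; simp only [hM]; linarith
  have hMpos : (0:ℝ) < M := by linarith
  have hAb : -|A| ≤ A := neg_abs_le A
  have hbb : -|b| ≤ b := neg_abs_le b
  have hDb : -|D| ≤ D := neg_abs_le D
  have hAb' : A ≤ |A| := le_abs_self A
  have hbb' : b ≤ |b| := le_abs_self b
  have hDb' : D ≤ |D| := le_abs_self D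
  have habA := abs_nonneg A; have habb := abs_nonneg b; have habD := abs_nonneg D
  have hfM : 0 < f M := by
    simp only [hf]
    nlinarith [mul_nonneg habb (mul_nonneg hMpos.le (by linarith : (0:ℝ) ≤ M - 1)),
      mul_nonneg habD (by nlinarith : (0:ℝ) ≤ M ^ 2 - 1),
      mul_le_mul_of_nonneg_right hAb (sq_nonneg M),
      mul_le_mul_of_nonneg_right hbb hMpos.le,
      mul_nonneg (by linarith : (0:ℝ) ≤ M - 1) (by linarith : (0:ℝ) ≤ M + 1)]
  have hfmM : f (-M) < 0 := by
    simp only [hf]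
    nlinarith [mul_nonneg habb (mul_nonneg hMpos.le (by linarith : (0:ℝ) ≤ M - 1)),
      mul_nonneg habD (by nlinarith : (0:ℝ) ≤ M ^ 2 - 1),
      mul_le_mul_of_nonneg_right hAb' (sq_nonneg M),
      mul_le_mul_of_nonneg_right hbb' hMpos.le,
      mul_nonneg (by linarith : (0:ℝ) ≤ M - 1) (by linarith : (0:ℝ) ≤ M + 1)]
  have hcont : ContinuousOn f (Set.Icc (-M) M) := by
    apply Continuous.continuousOn; simp only [hf]; fun_prop
  have hsub := intermediate_value_Icc (by linarith : -M ≤ M) hcont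
  have h0 : (0:ℝ) ∈ Set.Icc (f (-M)) (f M) := ⟨hfmM.le, hfM.le⟩
  obtain ⟨x, _, hxr⟩ := hsub h0
  exact ⟨x, hxr⟩

/-- There exists `β` such that all complex roots of `P_β(λ) = λ³ + Aλ² + (B+β)λ + D`
lie strictly inside the unit circle iff `|D| < 1` and `|A - D| < 2`. -/
theorem exists_stable_parameter_iff (A B D : ℝ) :
    (∃ β : ℝ, ∀ z : ℂ,
        z ^ 3 + (A : ℂ) * z ^ 2 + ((B : ℂ) + (β : ℂ)) * z + (D : ℂ) = 0 →
        ‖z‖ < 1) ↔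
      (|D| < 1 ∧ |A - D| < 2) := by
  constructor
  · rintro ⟨β, H⟩
    obtain ⟨b, hbdef⟩ : ∃ t : ℝ, t = B + β := ⟨_, rfl⟩
    have Hb : ∀ z : ℂ, z ^ 3 + (A : ℂ) * z ^ 2 + (b : ℂ) * z + (D : ℂ) = 0 →
        ‖z‖ < 1 := by
      intro z hz
      apply H z
      have hcast : ((b : ℝ) : ℂ) = (B : ℂ) + (β : ℂ) := by rw [hbdef]; push_cast; ring
      rw [← hcast]; exact hz
    obtain ⟨x, hx⟩ := realRootExists A b D
    have hroot_abs : ∀ y : ℝ, y ^ 3 + A * y ^ 2 + b * y + D = 0 → -1 < y ∧ y < 1 := by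
      intro y hy
      have h1 : ‖(y : ℂ)‖ < 1 := Hb y (by exact_mod_cast hy)
      rw [Complex.norm_real, Real.norm_eq_abs] at h1
      exact abs_lt.mp h1
    obtain ⟨hx1, hx2⟩ := hroot_abs x hx
    obtain ⟨p, hp⟩ : ∃ t : ℝ, t = A + x := ⟨_, rfl⟩
    obtain ⟨q, hq⟩ : ∃ t : ℝ, t = b + x * p := ⟨_, rfl⟩
    have hD : D = -(x * q) := by rw [hq, hp]; linear_combination hx
    have hfacC : ∀ z : ℂ, z ^ 3 + (A:ℂ) * z ^ 2 + (b:ℂ) * z + (D:ℂ)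
        = (z - (x:ℂ)) * (z ^ 2 + (p:ℂ) * z + (q:ℂ)) := by
      intro z
      have h1 : (p:ℂ) = (A:ℂ) + (x:ℂ) := by exact_mod_cast hp
      have h2 : (q:ℂ) = (b:ℂ) + (x:ℂ) * (p:ℂ) := by exact_mod_cast hq
      have h3 : (D:ℂ) = -((x:ℂ) * (q:ℂ)) := by exact_mod_cast hD
      rw [h3, h2, h1]; ring
    have hquad_abs : ∀ y : ℝ, y ^ 2 + p * y + q = 0 → -1 < y ∧ y < 1 := by
      intro y hy
      apply hroot_abs
      have hC : (y:ℂ) ^ 2 + (p:ℂ) * (y:ℂ) + (q:ℂ) = 0 := by exact_mod_cast hy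
      have h5 := hfacC (y:ℂ)
      rw [hC, mul_zero] at h5
      exact_mod_cast h5
    have key : |q| < 1 ∧ 0 < 1 + p + q ∧ 0 < 1 - p + q ∧ 0 < 1 + x * p + x ^ 2 * q := by
      rcases le_or_gt (4 * q) (p ^ 2) with hd | hd
      · obtain ⟨e, he⟩ : ∃ e : ℝ, e ^ 2 = p ^ 2 - 4 * q := ⟨Real.sqrt _, Real.sq_sqrt (by linarith)⟩
        obtain ⟨s, hs⟩ : ∃ u : ℝ, u = (-p + e) / 2 := ⟨_, rfl⟩
        obtain ⟨t, ht⟩ : ∃ u : ℝ, u = (-p - e) / 2 := ⟨_, rfl⟩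
        have hp' : p = -(s + t) := by rw [hs, ht]; ring
        have hmul : s * t = q := by rw [hs, ht]; linear_combination (-(1:ℝ)/4) * he
        have hsroot : s ^ 2 + p * s + q = 0 := by rw [hs]; linear_combination ((1:ℝ)/4) * he
        have htroot : t ^ 2 + p * t + q = 0 := by rw [ht]; linear_combination ((1:ℝ)/4) * he
        obtain ⟨hs1, hs2⟩ := hquad_abs s hsroot
        obtain ⟨ht1, ht2⟩ := hquad_abs t htroot
        exact keyReal p q x s t hp' hmul hx1 hx2 hs1 hs2 ht1 ht2
      · have hq0 : 0 < q := by nlinarith [sq_nonneg p]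
        obtain ⟨c, hc⟩ : ∃ c : ℝ, c ^ 2 = 4 * q - p ^ 2 := ⟨Real.sqrt _, Real.sq_sqrt (by linarith)⟩
        obtain ⟨z₀, hz₀⟩ : ∃ w : ℂ, w = ((-p/2 : ℝ) : ℂ) + ((c/2 : ℝ) : ℂ) * Complex.I := ⟨_, rfl⟩
        have hcC : ((c:ℂ)) ^ 2 = 4 * (q:ℂ) - (p:ℂ) ^ 2 := by exact_mod_cast hc
        have hroot : z₀ ^ 2 + (p:ℂ) * z₀ + (q:ℂ) = 0 := by
          rw [hz₀]; push_cast
          linear_combination (Complex.I ^ 2 / 4) * hcC + ((q:ℂ) - (p:ℂ) ^ 2 / 4) * Complex.I_sq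
        have habs : ‖z₀‖ < 1 := by
          apply Hb
          have h5 := hfacC z₀
          rw [hroot, mul_zero] at h5
          exact h5
        have hnq : Complex.normSq z₀ = q := by
          rw [hz₀, Complex.normSq_apply]
          simp only [Complex.add_re, Complex.ofReal_re, Complex.mul_re, Complex.I_re,
            Complex.I_im, Complex.ofReal_im, Complex.add_im, Complex.mul_im]
          linear_combination hc / 4
        have hq1 : q < 1 := by
          have h2 : ‖z₀‖ ^ 2 < 1 := by
            exact pow_lt_one₀ (norm_nonneg _) habs (by norm_num)
          rw [Complex.sq_norm, hnq] at h2
          exact h2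
        exact keyConj p q x hd hq0 hq1 hx1 hx2
    obtain ⟨hqa, hpos1, hpos2, hpos3⟩ := key
    exact finalStep A b D x p q hD hq hp hx1 hx2 hqa hpos1 hpos2 hpos3
  · rintro ⟨hD, hAD⟩
    obtain ⟨ρ, ⟨hρpos, hρD, hρA⟩, hρ1⟩ :
        ∃ ρ : ℝ, (0 < ρ ∧ |D| < ρ ^ 2 ∧ |A * ρ ^ 2 - D| < 2 * ρ ^ 3) ∧ ρ ∈ Set.Iio (1:ℝ) := by
      have h1 : ∀ᶠ ρ : ℝ in nhds 1, 0 < ρ := eventually_gt_nhds one_pos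
      have h2 : ∀ᶠ ρ : ℝ in nhds 1, |D| < ρ ^ 2 := by
        have hc : ContinuousAt (fun ρ : ℝ => ρ ^ 2) (1:ℝ) := by fun_prop
        have := continuousAt_const.eventually_lt hc (by simpa using hD : (fun _ : ℝ => |D|) 1 < (1:ℝ) ^ 2)
        simpa using this
      have h3 : ∀ᶠ ρ : ℝ in nhds 1, |A * ρ ^ 2 - D| < 2 * ρ ^ 3 := by
        have hc1 : ContinuousAt (fun ρ : ℝ => |A * ρ ^ 2 - D|) (1:ℝ) := by fun_prop
        have hc2 : ContinuousAt (fun ρ : ℝ => 2 * ρ ^ 3) (1:ℝ) := by fun_prop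
        have := hc1.eventually_lt hc2 (by simpa using hAD)
        simpa using this
      have hmem : ∀ᶠ ρ : ℝ in nhdsWithin (1:ℝ) (Set.Iio 1), ρ ∈ Set.Iio (1:ℝ) :=
        eventually_mem_nhdsWithin
      have hall := (((h1.and (h2.and h3)).filter_mono nhdsWithin_le_nhds).and hmem)
      obtain ⟨ρ, ⟨ha, hb', hc'⟩, hm⟩ := hall.exists
      exact ⟨ρ, ⟨ha, hb', hc'⟩, hm⟩
    have hρ1' : ρ < 1 := hρ1
    have hρ2 : 0 < ρ ^ 2 := by positivity
    obtain ⟨qq, hqq⟩ : ∃ t : ℝ, t = ρ ^ 2 := ⟨_, rfl⟩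
    obtain ⟨α, hα⟩ : ∃ t : ℝ, t = -(D / ρ ^ 2) := ⟨_, rfl⟩
    obtain ⟨pp, hpp⟩ : ∃ t : ℝ, t = A - D / ρ ^ 2 := ⟨_, rfl⟩
    obtain ⟨b₀, hb₀⟩ : ∃ t : ℝ, t = qq - α * pp := ⟨_, rfl⟩
    refine ⟨b₀ - B, ?_⟩
    intro z hz
    have hzC : z ^ 3 + (A:ℂ) * z ^ 2 + (b₀:ℂ) * z + (D:ℂ) = 0 := by
      rw [← hz]; push_cast; ring
    have kA : (A:ℂ) = (pp:ℂ) - (α:ℂ) := by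
      have : A = pp - α := by rw [hpp, hα]; ring
      exact_mod_cast this
    have kD : (D:ℂ) = -((α:ℂ) * (qq:ℂ)) := by
      have : D = -(α * qq) := by rw [hα, hqq]; field_simp
      exact_mod_cast this
    have kb : (b₀:ℂ) = (qq:ℂ) - (α:ℂ) * (pp:ℂ) := by exact_mod_cast hb₀
    have hid : z ^ 3 + (A:ℂ) * z ^ 2 + (b₀:ℂ) * z + (D:ℂ)
        = (z - (α:ℂ)) * (z ^ 2 + (pp:ℂ) * z + (qq:ℂ)) := by
      rw [kA, kb, kD]; ring
    have hfac : (z - (α:ℂ)) * (z ^ 2 + (pp:ℂ) * z + (qq:ℂ)) = 0 := by rw [← hid]; exact hzC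
    rcases mul_eq_zero.mp hfac with h | h
    · have hzα : z = (α:ℂ) := sub_eq_zero.mp h
      rw [hzα, Complex.norm_real, Real.norm_eq_abs, hα, abs_neg, abs_div, abs_of_pos hρ2, div_lt_one hρ2]
      exact hρD
    · apply quad_abs_lt_one pp qq ?_ ?_ z h
      · rw [hqq, abs_of_pos hρ2]; nlinarith
      · have h1 : |pp| * ρ ^ 2 < 2 * ρ ^ 3 := by
          have heq : |pp| * ρ ^ 2 = |A * ρ ^ 2 - D| := by
            rw [hpp]
            rw [← abs_of_pos hρ2, ← abs_mul]
            congr 1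
            field_simp
            rw [abs_of_pos hρ2]
          rw [heq]; exact hρA
        have h2 : |pp| < 2 * ρ := by
          by_contra hcon; push_neg at hcon
          nlinarith [mul_le_mul_of_nonneg_right hcon (le_of_lt hρ2)]
        have h3 : 0 < (1 - ρ) ^ 2 := pow_pos (by linarith) 2
        rw [hqq]
        nlinarith [abs_nonneg pp]
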